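/- arXiv:1009.4510 — 2 statements merged into one kernel-verified Lean document; each statement's English description precedes it below -/
import Mathlib

section
/- Let n ≥ 2 and let τ: W(T_n) → {a,b} be such that every interval of rank at most 3 in the butterfly poset T_n has a unique rising maximal chain. Then τ is a triple assignment: every non-trivial interval of T_n has a unique rising maximal chain. -/
open Finset

section ChainDefs
variable {α : Type*} [PartialOrder α]

/-- `l` is a saturated (maximal) chain from `x` to `y`, given as a list. -/
def SatChain (x y : α) (l : List α) : Prop :=
  l.Chain' (· ⋖ ·) ∧ l.head? = some x ∧ l.getLast? = some y

/-- A chain is rising for `τ` (where `true` codes the letter 𝐚 and `false` codes 𝐛)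
if every consecutive triple is mapped to 𝐚. -/
def RisingOn (τ : α → α → α → Bool) (l : List α) : Prop :=
  ∀ (i : ℕ) (h : i + 2 < l.length),
    τ (l.get ⟨i, by omega⟩) (l.get ⟨i + 1, by omega⟩) (l.get ⟨i + 2, by omega⟩) = true

/-- A triple assignment: every non-trivial interval has a unique rising maximal chain. -/
def IsTripleAssignment (τ : α → α → α → Bool) : Prop :=
  ∀ x y : α, x < y → ∃! l : List α, SatChain x y l ∧ RisingOn τ l

/-- An `R`-labeling with label set `Λ` and relation `sim`: every non-trivial interval
has a unique maximal chain whose successive labels are related by `sim`. -/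
def IsRLabeling {Λ : Type*} (sim : Λ → Λ → Prop) (lab : α → α → Λ) : Prop :=
  ∀ x y : α, x < y → ∃! l : List α,
    SatChain x y l ∧ ∀ (i : ℕ) (h : i + 2 < l.length),
      sim (lab (l.get ⟨i, by omega⟩) (l.get ⟨i + 1, by omega⟩))
          (lab (l.get ⟨i + 1, by omega⟩) (l.get ⟨i + 2, by omega⟩))

/-- `y` is a breakpoint for `τ`: the value `τ x y z` does not depend on `x ⋖ y` and `y ⋖ z`. -/
def IsBreakpoint (τ : α → α → α → Bool) (y : α) : Prop :=
  ∃ v : Bool, ∀ x z : α, x ⋖ y → y ⋖ z → τ x y z = v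

end ChainDefs

section FlagDefs
variable {α : Type*} [PartialOrder α] [BoundedOrder α]

/-- `rk` is a rank function making the bounded poset graded. -/
def IsGraded (rk : α → ℕ) : Prop :=
  rk ⊥ = 0 ∧ ∀ x y : α, x ⋖ y → rk y = rk x + 1

/-- Flag `f`-vector entry: the number of chains `0̂ < x₁ < ⋯ < x_k < 1̂`
passing exactly through the ranks in `S`. -/
noncomputable def flagF (rk : α → ℕ) (S : Finset ℕ) : ℕ :=
  Nat.card {c : Finset α // IsChain (· ≤ ·) (↑c : Set α) ∧ c.image rk = S ∧
    c.card = S.card ∧ ∀ x ∈ c, ⊥ < x ∧ x < ⊤}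

/-- Flag `h`-vector entry: `h_S = ∑_{T ⊆ S} (-1)^{|S∖T|} f_T`. -/
noncomputable def flagH (rk : α → ℕ) (S : Finset ℕ) : ℤ :=
  ∑ T ∈ S.powerset, (-1) ^ (S.card - T.card) * (flagF rk T : ℤ)

/-- The descent set of a maximal chain `0̂ = x₀ ⋖ x₁ ⋖ ⋯ ⋖ x_n = 1̂` with respect to `τ`:
those `i` with `τ (x_{i-1}) (x_i) (x_{i+1}) = 𝐛`. -/
def descSet (τ : α → α → α → Bool) (l : List α) : Finset ℕ :=
  (Finset.Icc 1 (l.length - 2)).filter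
    (fun i => τ (l.getD (i - 1) ⊥) (l.getD i ⊥) (l.getD (i + 1) ⊥) = false)

end FlagDefs

/-- The butterfly poset `T_n`: one element at ranks `0` and `n` and two elements
(`side = true/false`) at each rank `1 ≤ i ≤ n-1`; any two elements of distinct
ranks are comparable. -/
structure Butt (n : ℕ) where
  rk : ℕ
  side : Bool
  hle : rk ≤ n
  hb : rk = 0 ∨ rk = n → side = false

theorem Butt.ext' {n : ℕ} {x y : Butt n} (h1 : x.rk = y.rk) (h2 : x.side = y.side) :
    x = y := by
  cases x; cases y; simp_all

instance {n : ℕ} : PartialOrder (Butt n) where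
  le x y := x = y ∨ x.rk < y.rk
  le_refl x := Or.inl rfl
  le_trans x y z hxy hyz := by
    rcases hxy with rfl | h
    · exact hyz
    · rcases hyz with rfl | h'
      · exact Or.inr h
      · exact Or.inr (h.trans h')
  le_antisymm x y hxy hyx := by
    rcases hxy with rfl | h
    · rfl
    · rcases hyx with rfl | h'
      · rfl
      · omega

instance {n : ℕ} : BoundedOrder (Butt n) where
  bot := ⟨0, false, Nat.zero_le n, fun _ => rfl⟩
  top := ⟨n, false, le_refl n, fun _ => rfl⟩
  bot_le x := by
    by_cases h : x.rk = 0
    · exact Or.inl (Butt.ext' h.symm (x.hb (Or.inl h)).symm)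
    · exact Or.inr (by simpa using Nat.pos_of_ne_zero h)
  le_top x := by
    by_cases h : x.rk = n
    · exact Or.inl (Butt.ext' h (x.hb (Or.inr h)))
    · exact Or.inr (lt_of_le_of_ne x.hle h)

/-- The poset `P_n`: two copies (`copy = true/false`) of the butterfly poset `T_n`
glued along their minimum and maximum elements. -/
structure Glue (n : ℕ) where
  rk : ℕ
  side : Bool
  copy : Bool
  hle : rk ≤ n
  hb : rk = 0 ∨ rk = n → side = false ∧ copy = false

theorem Glue.ext' {n : ℕ} {x y : Glue n} (h1 : x.rk = y.rk) (h2 : x.side = y.side)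
    (h3 : x.copy = y.copy) : x = y := by
  cases x; cases y; simp_all

instance {n : ℕ} : PartialOrder (Glue n) where
  le x y := x = y ∨ (x.rk < y.rk ∧ (x.copy = y.copy ∨ x.rk = 0 ∨ y.rk = n))
  le_refl x := Or.inl rfl
  le_trans x y z hxy hyz := by
    rcases hxy with rfl | ⟨h1, h2⟩
    · exact hyz
    · rcases hyz with rfl | ⟨h3, h4⟩
      · exact Or.inr ⟨h1, h2⟩
      · refine Or.inr ⟨h1.trans h3, ?_⟩
        rcases h2 with hc | h0 | hn
        · rcases h4 with hc' | h0' | hn'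
          · exact Or.inl (hc.trans hc')
          · omega
          · exact Or.inr (Or.inr hn')
        · exact Or.inr (Or.inl h0)
        · have := z.hle; omega
  le_antisymm x y hxy hyx := by
    rcases hxy with rfl | ⟨h1, _⟩
    · rfl
    · rcases hyx with rfl | ⟨h2, _⟩
      · rfl
      · omega

instance {n : ℕ} : BoundedOrder (Glue n) where
  bot := ⟨0, false, false, Nat.zero_le n, fun _ => ⟨rfl, rfl⟩⟩
  top := ⟨n, false, false, le_refl n, fun _ => ⟨rfl, rfl⟩⟩
  bot_le x := by
    by_cases h : x.rk = 0
    · exact Or.inl (Glue.ext' h.symm (x.hb (Or.inl h)).1.symm (x.hb (Or.inl h)).2.symm)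
    · exact Or.inr ⟨by simpa using Nat.pos_of_ne_zero h, Or.inr (Or.inl rfl)⟩
  le_top x := by
    by_cases h : x.rk = n
    · exact Or.inl (Glue.ext' h (x.hb (Or.inr h)).1 (x.hb (Or.inr h)).2)
    · exact Or.inr ⟨lt_of_le_of_ne x.hle h, Or.inr (Or.inr rfl)⟩

/-- Eulerian condition (counting form): every non-trivial interval has as many
elements of even rank as of odd rank. -/
def EulerianCount {α : Type*} [PartialOrder α] (rk : α → ℕ) : Prop :=
  ∀ x y : α, x < y →
    Nat.card {z : α // z ∈ Set.Icc x y ∧ Even (rk z - rk x)} =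
    Nat.card {z : α // z ∈ Set.Icc x y ∧ ¬ Even (rk z - rk x)}

section AbIndex

/-- The variable 𝐚 of the non-commutative polynomial ring `ℤ⟨𝐚,𝐛⟩`,
realized as the monoid algebra of the free monoid on two letters. -/
noncomputable def abA : MonoidAlgebra ℤ (FreeMonoid Bool) :=
  MonoidAlgebra.single (FreeMonoid.ofList [true]) 1

/-- The variable 𝐛. -/
noncomputable def abB : MonoidAlgebra ℤ (FreeMonoid Bool) :=
  MonoidAlgebra.single (FreeMonoid.ofList [false]) 1

/-- The 𝐚𝐛-monomial `u_S` of length `n-1`, with 𝐛 in the positions of `S`. -/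
def abMonomial (n : ℕ) (S : Finset ℕ) : FreeMonoid Bool :=
  FreeMonoid.ofList ((List.range (n - 1)).map (fun j => decide ((j + 1) ∉ S)))

/-- The 𝐚𝐛-index `Ψ(P) = ∑_S h_S u_S` of a bounded poset of rank `n`
with rank function `rk`. -/
noncomputable def abIndex {α : Type*} [PartialOrder α] [BoundedOrder α]
    (rk : α → ℕ) (n : ℕ) : MonoidAlgebra ℤ (FreeMonoid Bool) :=
  ∑ S ∈ (Finset.Icc 1 (n - 1)).powerset,
    MonoidAlgebra.single (abMonomial n S) (flagH rk S)

/-- The weight `wt(c)` of a maximal chain, as an 𝐚𝐛-monomial. -/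
def chainWeight {α : Type*} [PartialOrder α] [OrderBot α]
    (τ : α → α → α → Bool) (l : List α) : FreeMonoid Bool :=
  FreeMonoid.ofList ((List.range (l.length - 2)).map
    (fun i => τ (l.getD i ⊥) (l.getD (i + 1) ⊥) (l.getD (i + 2) ⊥)))

end AbIndex

section AuxChain
variable {α : Type*} [PartialOrder α] {τ : α → α → α → Bool}

lemma risingOn_short {l : List α} (h : l.length ≤ 2) : RisingOn τ l := by
  intro i hi; omega

lemma risingOn_triple_iff {a b c : α} : RisingOn τ [a, b, c] ↔ τ a b c = true := by
  constructor
  · intro H; exact H 0 (by norm_num)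
  · intro h i hi
    have : i = 0 := by simp at hi; omega
    subst this; exact h

lemma risingOn_quad_iff {a b c d : α} :
    RisingOn τ [a, b, c, d] ↔ τ a b c = true ∧ τ b c d = true := by
  constructor
  · intro H; exact ⟨H 0 (by norm_num), H 1 (by norm_num)⟩
  · rintro ⟨h1, h2⟩ i hi
    have : i = 0 ∨ i = 1 := by simp at hi; omega
    rcases this with rfl | rfl
    · exact h1
    · exact h2

lemma risingOn_concat_iff {l : List α} (h2 : 2 ≤ l.length) (y : α) :
    RisingOn τ (l ++ [y]) ↔ RisingOn τ l ∧
      τ (l[l.length - 2]'(by omega)) (l[l.length - 1]'(by omega)) y = true := by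
  constructor
  · intro H
    constructor
    · intro i hi
      have hi' : i + 2 < (l ++ [y]).length := by simp; omega
      have := H i hi'
      simp only [List.get_eq_getElem] at this ⊢
      rwa [List.getElem_append_left (by omega), List.getElem_append_left (by omega),
        List.getElem_append_left (by omega)] at this
    · have hi' : (l.length - 2) + 2 < (l ++ [y]).length := by simp; omega
      have := H (l.length - 2) hi'
      simp only [List.get_eq_getElem] at this
      rw [List.getElem_append_left (by omega), List.getElem_append_left (by omega),
        List.getElem_append_right (by omega)] at this
      have e1 : l.length - 2 + 1 = l.length - 1 := by omega
      have e2 : l.length - 2 + 2 - l.length = 0 := by omega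
      simp only [e1, e2] at this
      simpa using this
  · rintro ⟨H, hlast⟩ i hi
    simp only [List.length_append, List.length_singleton] at hi
    simp only [List.get_eq_getElem]
    by_cases hcase : i + 2 < l.length
    · rw [List.getElem_append_left (by omega), List.getElem_append_left (by omega),
        List.getElem_append_left (by omega)]
      exact H i hcase
    · have hi2 : i = l.length - 2 := by omega
      rw [List.getElem_append_left (by omega), List.getElem_append_left (by omega),
        List.getElem_append_right (by omega)]
      have e1 : i + 1 = l.length - 1 := by omega
      have e2 : i + 2 - l.length = 0 := by omega
      simp only [e1, e2]
      simp only [hi2]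
      simpa using hlast

lemma risingOn_of_concat {l : List α} {y : α} (H : RisingOn τ (l ++ [y])) :
    RisingOn τ l := by
  by_cases h2 : 2 ≤ l.length
  · exact ((risingOn_concat_iff h2 y).1 H).1
  · exact risingOn_short (by omega)

lemma getElem_of_getLast? {l : List α} {p : α} (h : l.getLast? = some p)
    (hl : 0 < l.length) : l[l.length - 1]'(by omega) = p := by
  rw [List.getLast?_eq_getElem?, List.getElem?_eq_getElem (by omega)] at h
  exact Option.some_injective _ h

lemma risingOn_snoc_iff {l₂ : List α} {q p : α} (hq : l₂.getLast? = some q) (y : α) :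
    RisingOn τ ((l₂ ++ [p]) ++ [y]) ↔ RisingOn τ (l₂ ++ [p]) ∧ τ q p y = true := by
  have hne : l₂ ≠ [] := by rintro rfl; simp at hq
  have h1 : 0 < l₂.length := List.length_pos_iff.2 hne
  have h2 : 2 ≤ (l₂ ++ [p]).length := by simp; omega
  rw [risingOn_concat_iff h2 y]
  have gq : (l₂ ++ [p])[(l₂ ++ [p]).length - 2]'(by omega) = q := by
    have e : (l₂ ++ [p]).length - 2 = l₂.length - 1 := by simp
    simp only [e]
    rw [List.getElem_append_left (by omega)]
    exact getElem_of_getLast? hq h1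
  have gp : (l₂ ++ [p])[(l₂ ++ [p]).length - 1]'(by omega) = p := by
    have e : (l₂ ++ [p]).length - 1 = l₂.length := by simp
    simp only [e]
    rw [List.getElem_append_right (le_refl _)]
    simp
  rw [gq, gp]

lemma SatChain.ne_nil {x y : α} {l : List α} (h : SatChain x y l) : l ≠ [] := by
  rintro rfl; simp [SatChain] at h

lemma satChain_pair {x y : α} (h : x ⋖ y) : SatChain x y [x, y] :=
  ⟨by simp [List.Chain', h], rfl, rfl⟩

lemma satChain_triple {x w y : α} (h1 : x ⋖ w) (h2 : w ⋖ y) : SatChain x y [x, w, y] :=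
  ⟨by simp [List.Chain', h1, h2], rfl, rfl⟩

lemma satChain_quad {x w v y : α} (h1 : x ⋖ w) (h2 : w ⋖ v) (h3 : v ⋖ y) :
    SatChain x y [x, w, v, y] :=
  ⟨by simp [List.Chain', h1, h2, h3], rfl, rfl⟩

lemma satChain_snoc {x p y : α} {l : List α} (h : SatChain x p l) (hc : p ⋖ y) :
    SatChain x y (l ++ [y]) := by
  obtain ⟨hch, hh, hl⟩ := h
  refine ⟨?_, ?_, ?_⟩
  · show List.IsChain _ _
    rw [List.isChain_append]
    refine ⟨hch, List.isChain_singleton y, ?_⟩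
    intro a ha b hb
    simp at hb; subst hb
    rw [hl] at ha; simp at ha; subst ha; exact hc
  · rw [List.head?_append, hh]; rfl
  · exact List.getLast?_concat

lemma satChain_decomp {x y : α} {l : List α} (h : SatChain x y l) (h2 : 2 ≤ l.length) :
    ∃ l' p, l = l' ++ [y] ∧ SatChain x p l' ∧ p ⋖ y := by
  obtain ⟨hch, hh, hl⟩ := h
  have hne : l ≠ [] := by rintro rfl; simp at h2
  have hy : l.getLast hne = y := by
    rw [List.getLast?_eq_getLast hne] at hl; exact Option.some_injective _ hl
  have hdne : l.dropLast ≠ [] := by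
    have : l.dropLast.length = l.length - 1 := List.length_dropLast
    intro e; rw [e] at this; simp at this; omega
  refine ⟨l.dropLast, l.dropLast.getLast hdne, ?_, ⟨?_, ?_, ?_⟩, ?_⟩
  · rw [← hy]; exact (List.dropLast_append_getLast hne).symm
  · exact hch.infix (List.dropLast_prefix l).isInfix
  · have : l = l.dropLast ++ [l.getLast hne] := (List.dropLast_append_getLast hne).symm
    rw [this, List.head?_append] at hh
    rcases e : l.dropLast.head? with _ | a
    · rw [e] at hh; simp at e; exact absurd e hdne
    · rw [e] at hh
      simp [Option.or] at hh
      subst hh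
      rfl
  · exact List.getLast?_eq_getLast hdne
  · have hl2 : l = l.dropLast ++ [y] := by
      rw [← hy]; exact (List.dropLast_append_getLast hne).symm
    rw [hl2] at hch; simp only [List.Chain'] at hch; rw [List.isChain_append] at hch
    exact hch.2.2 _ (List.getLast?_eq_getLast hdne) y rfl

lemma satChain_head {x y : α} {l : List α} (h : SatChain x y l) (i : ℕ)
    (hi : i < l.length) : True := trivial

end AuxChain

section ButtAux
variable {n : ℕ}

lemma Butt.lt_iff_rk {x y : Butt n} : x < y ↔ x.rk < y.rk := by
  constructor
  · intro h
    rcases h.le with rfl | h1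
    · exact absurd rfl h.ne
    · exact h1
  · intro h
    exact lt_of_le_of_ne (Or.inr h) (by rintro rfl; omega)

lemma Butt.covBy_iff {x y : Butt n} : x ⋖ y ↔ y.rk = x.rk + 1 := by
  constructor
  · intro h
    by_contra hne
    have h1 : x.rk < y.rk := Butt.lt_iff_rk.1 h.1
    have hyn : y.rk ≤ n := y.hle
    set w : Butt n := ⟨x.rk + 1, false, by omega, fun _ => rfl⟩ with hw
    have hwrk : w.rk = x.rk + 1 := rfl
    have hw1 : x < w := Butt.lt_iff_rk.2 (by omega)
    have hw2 : w < y := Butt.lt_iff_rk.2 (by omega)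
    exact h.2 hw1 hw2
  · intro h
    constructor
    · exact Butt.lt_iff_rk.2 (by omega)
    · intro w hw1 hw2
      have := Butt.lt_iff_rk.1 hw1
      have := Butt.lt_iff_rk.1 hw2
      omega

lemma Butt.mem_pair {u v w : Butt n} (huv : u ≠ v) (h1 : u.rk = v.rk)
    (h2 : w.rk = u.rk) : w = u ∨ w = v := by
  have hs : u.side ≠ v.side := fun h => huv (Butt.ext' h1 h)
  by_cases hw : w.side = u.side
  · exact Or.inl (Butt.ext' h2 hw)
  · refine Or.inr (Butt.ext' (h2.trans h1) ?_)
    revert hs hw; cases w.side <;> cases u.side <;> cases v.side <;> simp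

lemma satChain_rk {x y : Butt n} {l : List (Butt n)} (h : SatChain x y l) :
    ∀ i (hi : i < l.length), (l[i]'hi).rk = x.rk + i := by
  intro i
  induction i with
  | zero =>
    intro hi
    have hne : l ≠ [] := h.ne_nil
    have := h.2.1
    rw [List.head?_eq_head hne] at this
    have hx : l.head hne = x := Option.some_injective _ this
    rw [List.getElem_zero hi, hx]
    omega
  | succ i ih =>
    intro hi
    have hc := List.isChain_iff_getElem.1 h.1 i (by omega)
    have := Butt.covBy_iff.1 hc
    rw [this, ih (by omega)]
    omega

lemma satChain_length {x y : Butt n} {l : List (Butt n)} (h : SatChain x y l) :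
    x.rk + l.length = y.rk + 1 := by
  have hne : l ≠ [] := h.ne_nil
  have hpos : 0 < l.length := List.length_pos_iff.2 hne
  have hy : l[l.length - 1]'(by omega) = y := getElem_of_getLast? h.2.2 hpos
  have := satChain_rk h (l.length - 1) (by omega)
  rw [hy] at this
  omega

lemma satChain_shape2 {u v : Butt n} {l : List (Butt n)} (h : SatChain u v l)
    (hr : v.rk = u.rk + 2) : ∃ w, l = [u, w, v] ∧ u ⋖ w ∧ w ⋖ v := by
  have hlen : l.length = 3 := by have := satChain_length h; omega
  obtain ⟨a, b, c, rfl⟩ := List.length_eq_three.1 hlen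
  have ha : a = u := by have := h.2.1; simpa using this
  have hc : c = v := by have := h.2.2; simpa using this
  subst ha; subst hc
  have hch := h.1
  simp [List.Chain', List.isChain_cons_cons] at hch
  exact ⟨b, rfl, hch.1, hch.2⟩

lemma satChain_shape3 {u v : Butt n} {l : List (Butt n)} (h : SatChain u v l)
    (hr : v.rk = u.rk + 3) :
    ∃ w1 w2, l = [u, w1, w2, v] ∧ u ⋖ w1 ∧ w1 ⋖ w2 ∧ w2 ⋖ v := by
  have hlen : l.length = 4 := by have := satChain_length h; omega
  rcases l with _ | ⟨a, _ | ⟨b, _ | ⟨c, _ | ⟨d, rest⟩⟩⟩⟩ <;> simp at hlen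
  subst hlen
  have ha : a = u := by have := h.2.1; simpa using this
  have hd : d = v := by have := h.2.2; simpa using this
  subst ha; subst hd
  have hch := h.1
  simp [List.Chain', List.isChain_cons_cons] at hch
  exact ⟨b, c, rfl, hch.1, hch.2.1, hch.2.2⟩

end ButtAux


/-- If every interval of rank at most 3 of the butterfly poset `T_n`
(`n ≥ 2`) has a unique rising maximal chain for `τ`, then `τ` is a triple assignment:
every non-trivial interval has a unique rising maximal chain. -/
theorem butterfly_tripleAssignment (n : ℕ) (hn : 2 ≤ n)
    (τ : Butt n → Butt n → Butt n → Bool)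
    (h3 : ∀ x y : Butt n, x < y → y.rk - x.rk ≤ 3 →
      ∃! l : List (Butt n), SatChain x y l ∧ RisingOn τ l) :
    IsTripleAssignment τ := by
  have hlt : ∀ {u v : Butt n}, u.rk < v.rk → u < v := fun h => Butt.lt_iff_rk.2 h
  have cov : ∀ {u v : Butt n}, v.rk = u.rk + 1 → u ⋖ v := fun h => Butt.covBy_iff.2 h
  have uniq2 : ∀ (u v w w' : Butt n), v.rk = u.rk + 2 →
      u ⋖ w → w ⋖ v → u ⋖ w' → w' ⋖ v → τ u w v = true → τ u w' v = true → w = w' := by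
    intro u v w w' hr c1 c2 c3 c4 t1 t2
    obtain ⟨c, -, hu⟩ := h3 u v (hlt (by omega)) (by omega)
    have e1 := hu [u, w, v] ⟨satChain_triple c1 c2, risingOn_triple_iff.2 t1⟩
    have e2 := hu [u, w', v] ⟨satChain_triple c3 c4, risingOn_triple_iff.2 t2⟩
    have := e1.trans e2.symm
    simpa using this
  have ex2 : ∀ u v : Butt n, v.rk = u.rk + 2 →
      ∃ w, u ⋖ w ∧ w ⋖ v ∧ τ u w v = true := by
    intro u v hr
    obtain ⟨c, ⟨hsc, hrise⟩, -⟩ := h3 u v (hlt (by omega)) (by omega)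
    obtain ⟨w, rfl, cw1, cw2⟩ := satChain_shape2 hsc hr
    exact ⟨w, cw1, cw2, risingOn_triple_iff.1 hrise⟩
  have ex3 : ∀ u v : Butt n, v.rk = u.rk + 3 →
      ∃ w1 w2, u ⋖ w1 ∧ w1 ⋖ w2 ∧ w2 ⋖ v ∧ τ u w1 w2 = true ∧ τ w1 w2 v = true := by
    intro u v hr
    obtain ⟨c, ⟨hsc, hrise⟩, -⟩ := h3 u v (hlt (by omega)) (by omega)
    obtain ⟨w1, w2, rfl, c1, c2, c3⟩ := satChain_shape3 hsc hr
    obtain ⟨t1, t2⟩ := risingOn_quad_iff.1 hrise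
    exact ⟨w1, w2, c1, c2, c3, t1, t2⟩
  have uniq3 : ∀ (u v w1 w2 w1' w2' : Butt n), v.rk = u.rk + 3 →
      u ⋖ w1 → w1 ⋖ w2 → w2 ⋖ v → u ⋖ w1' → w1' ⋖ w2' → w2' ⋖ v →
      τ u w1 w2 = true → τ w1 w2 v = true → τ u w1' w2' = true → τ w1' w2' v = true →
      w1 = w1' ∧ w2 = w2' := by
    intro u v w1 w2 w1' w2' hr c1 c2 c3 c4 c5 c6 t1 t2 t3 t4
    obtain ⟨c, -, hu⟩ := h3 u v (hlt (by omega)) (by omega)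
    have e1 := hu [u, w1, w2, v] ⟨satChain_quad c1 c2 c3, risingOn_quad_iff.2 ⟨t1, t2⟩⟩
    have e2 := hu [u, w1', w2', v] ⟨satChain_quad c4 c5 c6, risingOn_quad_iff.2 ⟨t3, t4⟩⟩
    have := e1.trans e2.symm
    simp at this
    exact this
  have key : ∀ k (x y : Butt n), x < y → y.rk ≤ x.rk + k →
      ∃! l, SatChain x y l ∧ RisingOn τ l := by
    intro k
    induction k with
    | zero =>
      intro x y hxy hk
      exact absurd (Butt.lt_iff_rk.1 hxy) (by omega)
    | succ k ih =>
      intro x y hxy hk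
      by_cases hd3 : y.rk ≤ x.rk + 3
      · exact h3 x y hxy (by have := Butt.lt_iff_rk.1 hxy; omega)
      push_neg at hd3
      have hm : x.rk + 4 ≤ y.rk := hd3
      have hyn : y.rk ≤ n := y.hle
      obtain ⟨A, hArk, hAside⟩ : ∃ A : Butt n, A.rk = y.rk - 1 ∧ A.side = true :=
        ⟨⟨y.rk - 1, true, by omega, fun h => absurd h (by omega)⟩, rfl, rfl⟩
      obtain ⟨B, hBrk, hBside⟩ : ∃ B : Butt n, B.rk = y.rk - 1 ∧ B.side = false :=
        ⟨⟨y.rk - 1, false, by omega, fun h => absurd h (by omega)⟩, rfl, rfl⟩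
      have hAB : A ≠ B := by intro e; rw [e, hBside] at hAside; exact Bool.false_ne_true hAside
      have buildData : ∀ W : Butt n, W.rk = y.rk - 1 →
          ∃ (l2 : List (Butt n)) (q p : Butt n),
            SatChain x W ((l2 ++ [p]) ++ [W]) ∧ RisingOn τ ((l2 ++ [p]) ++ [W]) ∧
            SatChain x p (l2 ++ [p]) ∧ RisingOn τ (l2 ++ [p]) ∧
            SatChain x q l2 ∧ τ q p W = true ∧
            p.rk = y.rk - 2 ∧ q.rk = y.rk - 3 := by
        intro W hW
        have hxW : x < W := hlt (by omega)
        obtain ⟨d, ⟨hsc, hrise⟩, -⟩ := ih x W hxW (by omega)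
        have hlen : 2 ≤ d.length := by have := satChain_length hsc; omega
        obtain ⟨l1, p, rfl, hsc1, hpW⟩ := satChain_decomp hsc hlen
        have hprk : p.rk = y.rk - 2 := by have := Butt.covBy_iff.1 hpW; omega
        have hlen1 : 2 ≤ l1.length := by have := satChain_length hsc1; omega
        obtain ⟨l2, q, rfl, hsc2, hqp⟩ := satChain_decomp hsc1 hlen1
        have hqrk : q.rk = y.rk - 3 := by have := Butt.covBy_iff.1 hqp; omega
        have hlast2 : l2.getLast? = some q := hsc2.2.2
        obtain ⟨hr1, ht⟩ := (risingOn_snoc_iff hlast2 W).1 hrise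
        exact ⟨l2, q, p, hsc, hrise, hsc1, hr1, hsc2, ht, hprk, hqrk⟩
      obtain ⟨lA, qA, pA, hscA, hriseA, hscA1, hrA1, hscA2, htA, hpArk, hqArk⟩ :=
        buildData A hArk
      obtain ⟨lB, qB, pB, hscB, hriseB, hscB1, hrB1, hscB2, htB, hpBrk, hqBrk⟩ :=
        buildData B hBrk
      have uniqIH : ∀ (z : Butt n) (l₁ l₂ : List (Butt n)), x < z → z.rk ≤ y.rk - 1 →
          SatChain x z l₁ → RisingOn τ l₁ → SatChain x z l₂ → RisingOn τ l₂ → l₁ = l₂ := by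
        intro z l₁ l₂ hz hzr h1 h1' h2 h2'
        obtain ⟨c, -, hu⟩ := ih x z hz (by omega)
        exact (hu l₁ ⟨h1, h1'⟩).trans (hu l₂ ⟨h2, h2'⟩).symm
      have samePQ : pA = pB → lA ++ [pA] = lB ++ [pB] ∧ lA = lB ∧ qA = qB := by
        intro hpp
        have hscB1' : SatChain x pA (lB ++ [pB]) := by rw [hpp]; exact hscB1
        have hll : lA ++ [pA] = lB ++ [pB] :=
          uniqIH pA _ _ (hlt (by omega)) (by omega) hscA1 hrA1 hscB1' hrB1
        have hll2 : lA = lB := by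
          have h' := hll; rw [hpp] at h'; exact List.append_cancel_right h'
        have hqq : qA = qB := by
          have h1 : lA.getLast? = some qA := hscA2.2.2
          have h2 : lB.getLast? = some qB := hscB2.2.2
          rw [hll2, h2] at h1
          exact Option.some_injective _ h1.symm
        exact ⟨hll, hll2, hqq⟩
      have notBoth : ¬(τ pA A y = true ∧ τ pB B y = true) := by
        rintro ⟨hgA, hgB⟩
        have contra1 : τ qB pA A = true → False := by
          intro ht
          have h1 := uniq3 qB y pA A pB B (by omega) (cov (by omega)) (cov (by omega))
            (cov (by omega)) (cov (by omega)) (cov (by omega)) (cov (by omega))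
            ht hgA htB hgB
          exact hAB h1.2
        by_cases hpp : pA = pB
        · obtain ⟨-, -, hqq⟩ := samePQ hpp
          exact contra1 (by rw [← hqq]; exact htA)
        · obtain ⟨v0, hv0c1, hv0c2, hv0t⟩ := ex2 qB A (by omega)
          have hv0rk : v0.rk = y.rk - 2 := by have := Butt.covBy_iff.1 hv0c1; omega
          rcases Butt.mem_pair (w := v0) hpp (by omega) (by omega) with h | h
          · exact contra1 (h ▸ hv0t)
          · have hpBA : pB ⋖ A := cov (by omega)
            have hscBA : SatChain x A ((lB ++ [pB]) ++ [A]) := satChain_snoc hscB1 hpBA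
            have hlast : lB.getLast? = some qB := hscB2.2.2
            have htBA : τ qB pB A = true := by rw [← h]; exact hv0t
            have hrBA : RisingOn τ ((lB ++ [pB]) ++ [A]) :=
              (risingOn_snoc_iff hlast A).2 ⟨hrB1, htBA⟩
            have heq := uniqIH A _ _ (hlt (by omega)) (by omega) hscBA hrBA hscA hriseA
            have h2 := List.append_cancel_right heq
            have h3 : pB = pA := by
              have e1 : (lB ++ [pB]).getLast? = some pB := List.getLast?_concat
              have e2 : (lA ++ [pA]).getLast? = some pA := List.getLast?_concat
              rw [h2, e2] at e1
              exact (Option.some_injective _ e1).symm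
            exact hpp h3.symm
      have notNeither : ¬(τ pA A y = false ∧ τ pB B y = false) := by
        rintro ⟨hgA, hgB⟩
        obtain ⟨w1, w2, hc1, hc2, hc3, t1, t2⟩ := ex3 qA y (by omega)
        have hw1rk : w1.rk = y.rk - 2 := by have := Butt.covBy_iff.1 hc1; omega
        have hw2rk : w2.rk = y.rk - 1 := by have := Butt.covBy_iff.1 hc2; omega
        rcases Butt.mem_pair (w := w2) hAB (by omega) (by omega) with h | h
        · rw [h] at t1 t2 hc2
          have hw1 : w1 = pA := uniq2 qA A w1 pA (by omega) hc1 hc2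
            (cov (by omega)) (cov (by omega)) t1 htA
          rw [hw1] at t2
          rw [t2] at hgA
          exact Bool.noConfusion hgA
        · rw [h] at t1 t2 hc2
          by_cases hvp : w1 = pB
          · rw [hvp] at t2
            rw [t2] at hgB
            exact Bool.noConfusion hgB
          · rcases Butt.mem_pair (w := pA) hvp (by omega) (by omega) with h2 | h2
            · have hpAB : pA ⋖ B := cov (by omega)
              have hscAB : SatChain x B ((lA ++ [pA]) ++ [B]) := satChain_snoc hscA1 hpAB
              have hlast : lA.getLast? = some qA := hscA2.2.2
              have htAB : τ qA pA B = true := by rw [h2]; exact t1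
              have hrAB : RisingOn τ ((lA ++ [pA]) ++ [B]) :=
                (risingOn_snoc_iff hlast B).2 ⟨hrA1, htAB⟩
              have heq := uniqIH B _ _ (hlt (by omega)) (by omega) hscAB hrAB hscB hriseB
              have hcan := List.append_cancel_right heq
              have h3 : pA = pB := by
                have e1 : (lA ++ [pA]).getLast? = some pA := List.getLast?_concat
                have e2 : (lB ++ [pB]).getLast? = some pB := List.getLast?_concat
                rw [hcan, e2] at e1
                exact (Option.some_injective _ e1).symm
              exact hvp (by rw [← h2, h3])
            · obtain ⟨-, -, hqq⟩ := samePQ h2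
              have htB' : τ qA pB B = true := by rw [hqq]; exact htB
              have hw1' : w1 = pB := uniq2 qA B w1 pB (by omega) hc1 hc2
                (cov (by omega)) (cov (by omega)) t1 htB'
              exact hvp hw1'
      have final : ∀ (W1 W2 : Butt n) (l1 l2 : List (Butt n)) (p1 p2 : Butt n),
          W1.rk = y.rk - 1 → W2.rk = y.rk - 1 → W1 ≠ W2 →
          SatChain x W1 ((l1 ++ [p1]) ++ [W1]) → RisingOn τ ((l1 ++ [p1]) ++ [W1]) →
          SatChain x W2 ((l2 ++ [p2]) ++ [W2]) → RisingOn τ ((l2 ++ [p2]) ++ [W2]) →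
          τ p1 W1 y = true → τ p2 W2 y = false →
          ∃! l, SatChain x y l ∧ RisingOn τ l := by
        intro W1 W2 l1 l2 p1 p2 hW1 hW2 hW12 hsc1 hr1 hsc2 hr2 hg1 hg2
        have hW1y : W1 ⋖ y := cov (by omega)
        refine ⟨((l1 ++ [p1]) ++ [W1]) ++ [y], ⟨satChain_snoc hsc1 hW1y, ?_⟩, ?_⟩
        · have hlast : (l1 ++ [p1]).getLast? = some p1 := List.getLast?_concat
          exact (risingOn_snoc_iff hlast y).2 ⟨hr1, hg1⟩
        · rintro l ⟨hsc, hrise⟩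
          have hlen : 2 ≤ l.length := by
            have := satChain_length hsc
            omega
          obtain ⟨l', w, rfl, hsc', hwy⟩ := satChain_decomp hsc hlen
          have hwrk : w.rk = y.rk - 1 := by have := Butt.covBy_iff.1 hwy; omega
          have hrise' : RisingOn τ l' := risingOn_of_concat hrise
          rcases Butt.mem_pair (w := w) hW12 (by omega) (by omega) with h | h
          · have hsc'' : SatChain x W1 l' := h ▸ hsc'
            have heq : l' = (l1 ++ [p1]) ++ [W1] :=
              uniqIH W1 l' _ (hlt (by omega)) (by omega) hsc'' hrise' hsc1 hr1
            rw [heq]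
          · have hsc'' : SatChain x W2 l' := h ▸ hsc'
            have heq : l' = (l2 ++ [p2]) ++ [W2] :=
              uniqIH W2 l' _ (hlt (by omega)) (by omega) hsc'' hrise' hsc2 hr2
            have hplast : (l2 ++ [p2]).getLast? = some p2 := List.getLast?_concat
            rw [heq] at hrise
            have hbad := ((risingOn_snoc_iff hplast y).1 hrise).2
            rw [hg2] at hbad
            exact absurd hbad (by simp)
      cases hgA : τ pA A y with
      | false =>
        cases hgB : τ pB B y with
        | false => exact absurd ⟨hgA, hgB⟩ notNeither
        | true =>
          exact final B A lB lA pB pA hBrk hArk (Ne.symm hAB) hscB hriseB hscA hriseA hgB hgA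
      | true =>
        cases hgB : τ pB B y with
        | false =>
          exact final A B lA lB pA pB hArk hBrk hAB hscA hriseA hscB hriseB hgA hgB
        | true => exact absurd ⟨hgA, hgB⟩ notBoth
  intro x y hxy
  exact key y.rk x y hxy (by omega)
end

section
/- The poset P_n has flag h-vector h_S = 2 − (−1)^{|S|} for all S ⊆ {1,...,n-1}; in particular h_S = 1 when |S| is even and h_S = 3 when |S| is odd, so all entries are positive. -/
open Finset

section GlueCount

lemma Glue.lt_iff' {n : ℕ} {x y : Glue n} :
    x < y ↔ x.rk < y.rk ∧ (x.copy = y.copy ∨ x.rk = 0 ∨ y.rk = n) := by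
  constructor
  · intro h
    rcases (h.le : x = y ∨ _) with rfl | h2
    · exact absurd rfl h.ne
    · exact h2
  · intro h
    refine lt_of_le_of_ne (Or.inr h) (fun e => ?_)
    subst e; omega

lemma Glue.bot_rk {n : ℕ} : (⊥ : Glue n).rk = 0 := rfl
lemma Glue.top_rk {n : ℕ} : (⊤ : Glue n).rk = n := rfl

/-- interior element constructor -/
def Glue.mkel {n : ℕ} (cp sd : Bool) (i : ℕ) (h1 : 1 ≤ i) (h2 : i ≤ n - 1) (hn : 2 ≤ n) :
    Glue n :=
  ⟨i, sd, cp, by omega, fun h => absurd h (by omega)⟩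

instance {n : ℕ} : DecidableEq (Glue n) := fun x y =>
  decidable_of_iff (x.rk = y.rk ∧ x.side = y.side ∧ x.copy = y.copy)
    ⟨fun ⟨h1, h2, h3⟩ => Glue.ext' h1 h2 h3, fun h => by subst h; exact ⟨rfl, rfl, rfl⟩⟩

lemma isChain_coe_empty {α : Type*} [PartialOrder α] :
    IsChain (· ≤ ·) (↑(∅ : Finset α) : Set α) := by
  rw [Finset.coe_empty]
  exact Set.pairwise_empty _

lemma glue_flagF_empty (n : ℕ) : flagF (Glue.rk (n := n)) ∅ = 1 := by
  have hu : ∀ c : {c : Finset (Glue n) // IsChain (· ≤ ·) (↑c : Set (Glue n)) ∧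
      c.image Glue.rk = ∅ ∧ c.card = Finset.card (∅ : Finset ℕ) ∧ ∀ x ∈ c, ⊥ < x ∧ x < ⊤},
      c = ⟨∅, by simp [isChain_coe_empty]⟩ := by
    rintro ⟨c, h1, h2, h3, h4⟩
    have : c = ∅ := Finset.card_eq_zero.mp (by simpa using h3)
    subst this; rfl
  haveI : Unique {c : Finset (Glue n) // IsChain (· ≤ ·) (↑c : Set (Glue n)) ∧
      c.image Glue.rk = ∅ ∧ c.card = Finset.card (∅ : Finset ℕ) ∧ ∀ x ∈ c, ⊥ < x ∧ x < ⊤} :=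
    ⟨⟨⟨∅, by simp [isChain_coe_empty]⟩⟩, hu⟩
  exact Nat.card_unique

lemma glue_flagF_nonempty (n : ℕ) (T : Finset ℕ) (hT : T ⊆ Finset.Icc 1 (n - 1))
    (hne : T.Nonempty) : flagF (Glue.rk (n := n)) T = 2 * 2 ^ T.card := by
  obtain ⟨i0, hi0⟩ := hne
  have hi0' := Finset.mem_Icc.mp (hT hi0)
  have hn : 2 ≤ n := by omega
  have hmem : ∀ i ∈ T, 1 ≤ i ∧ i ≤ n - 1 := fun i hi => Finset.mem_Icc.mp (hT hi)
  set P := fun c : Finset (Glue n) => IsChain (· ≤ ·) (↑c : Set (Glue n)) ∧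
      c.image Glue.rk = T ∧ c.card = T.card ∧ ∀ x ∈ c, ⊥ < x ∧ x < ⊤ with hP
  -- the bijection
  let g : Bool × ({i // i ∈ T} → Bool) → Finset (Glue n) :=
    fun p : Bool × ({i // i ∈ T} → Bool) =>
    T.attach.image (fun i => Glue.mkel p.1 (p.2 i) i.1 (hmem i.1 i.2).1 (hmem i.1 i.2).2 hn)
  have hgP : ∀ p, P (g p) := by
    intro p
    have hinj : Set.InjOn
        (fun i : {i // i ∈ T} => Glue.mkel p.1 (p.2 i) i.1 (hmem i.1 i.2).1 (hmem i.1 i.2).2 hn)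
        ↑T.attach := by
      intro a _ b _ hab
      have : a.1 = b.1 := congrArg Glue.rk hab
      exact Subtype.ext this
    refine ⟨?_, ?_, ?_, ?_⟩
    · intro x hx y hy hxy
      simp only [g, Finset.coe_image, Set.mem_image, Finset.mem_coe] at hx hy
      obtain ⟨a, _, rfl⟩ := hx
      obtain ⟨b, _, rfl⟩ := hy
      have hab : a.1 ≠ b.1 := by
        intro h
        exact hxy (by rw [Subtype.ext h])
      rcases Nat.lt_or_ge a.1 b.1 with h | h
      · exact Or.inl (Or.inr ⟨h, Or.inl rfl⟩)
      · exact Or.inr (Or.inr ⟨show (b.1 : ℕ) < a.1 by omega, Or.inl rfl⟩)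
    · rw [show (g p).image Glue.rk = T.attach.image (fun i : {i // i ∈ T} => i.1) from ?_]
      · simp [Finset.attach_image_val]
      · rw [Finset.image_image]
        rfl
    · rw [Finset.card_image_of_injOn hinj, Finset.card_attach]
    · intro x hx
      simp only [g, Finset.mem_image] at hx
      obtain ⟨a, _, rfl⟩ := hx
      have h1 := (hmem a.1 a.2).1
      have h2 := (hmem a.1 a.2).2
      constructor
      · rw [Glue.lt_iff']
        exact ⟨by simp only [Glue.bot_rk, Glue.mkel]; omega, Or.inr (Or.inl Glue.bot_rk)⟩
      · rw [Glue.lt_iff']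
        exact ⟨by simp only [Glue.top_rk, Glue.mkel]; omega, Or.inr (Or.inr Glue.top_rk)⟩
  have hbij : Function.Bijective (fun p : Bool × ({i // i ∈ T} → Bool) =>
      (⟨g p, hgP p⟩ : {c : Finset (Glue n) // P c})) := by
    constructor
    · rintro ⟨cp, σ⟩ ⟨cp', σ'⟩ h
      have h : g (cp, σ) = g (cp', σ') := congrArg Subtype.val h
      have key : ∀ i : {i // i ∈ T},
          Glue.mkel cp (σ i) i.1 (hmem i.1 i.2).1 (hmem i.1 i.2).2 hn =
          Glue.mkel cp' (σ' i) i.1 (hmem i.1 i.2).1 (hmem i.1 i.2).2 hn := by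
        intro i
        have hmemi : Glue.mkel cp (σ i) i.1 (hmem i.1 i.2).1 (hmem i.1 i.2).2 hn ∈
            g (cp', σ') := by
          rw [← h]
          exact Finset.mem_image_of_mem _ (Finset.mem_attach _ i)
        simp only [g, Finset.mem_image] at hmemi
        obtain ⟨b, _, hb⟩ := hmemi
        have hrk : b.1 = i.1 := congrArg Glue.rk hb
        have : b = i := Subtype.ext hrk
        subst this
        exact hb.symm
      have i0m : (⟨i0, hi0⟩ : {i // i ∈ T}) = ⟨i0, hi0⟩ := rfl
      have hc : cp = cp' := congrArg Glue.copy (key ⟨i0, hi0⟩)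
      have hσ : σ = σ' := funext fun i => congrArg Glue.side (key i)
      simp [hc, hσ]
    · rintro ⟨c, hch, himg, hcard, hint⟩
      -- rank is injective on c
      have hrkinj : Set.InjOn Glue.rk (↑c : Set (Glue n)) := by
        rw [← Finset.card_image_iff]
        rw [himg, hcard]
      -- all elements interior
      have hrkmem : ∀ x ∈ c, 1 ≤ x.rk ∧ x.rk ≤ n - 1 := by
        intro x hx
        exact hmem x.rk (himg ▸ Finset.mem_image_of_mem _ hx)
      -- all copies equal
      have hcopy : ∀ x ∈ c, ∀ y ∈ c, x.copy = y.copy := by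
        intro x hx y hy
        rcases eq_or_ne x y with rfl | hxy
        · rfl
        · have h1 := hrkmem x hx
          have h2 := hrkmem y hy
          rcases hch hx hy hxy with h | h
          · rcases (h : x = y ∨ _) with rfl | ⟨_, hc'⟩
            · rfl
            · rcases hc' with h' | h' | h'
              · exact h'
              all_goals omega
          · rcases (h : y = x ∨ _) with rfl | ⟨_, hc'⟩
            · rfl
            · rcases hc' with h' | h' | h'
              · exact h'.symm
              all_goals omega
      have hcne : c.Nonempty := by
        rw [← Finset.card_pos, hcard]
        exact Finset.card_pos.mpr ⟨i0, hi0⟩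
      obtain ⟨e, he⟩ := hcne
      -- representative element at each rank
      have hrep : ∀ i : {i // i ∈ T}, ∃ x ∈ c, x.rk = i.1 := by
        intro i
        have hmem' : (i : ℕ) ∈ c.image Glue.rk := by rw [himg]; exact i.2
        exact Finset.mem_image.mp hmem'
      choose w hw hwrk using hrep
      refine ⟨(e.copy, fun i => (w i).side), ?_⟩
      apply Subtype.ext
      show g _ = c
      ext x
      simp only [g, Finset.mem_image]
      constructor
      · rintro ⟨a, _, rfl⟩
        have : Glue.mkel e.copy (w a).side a.1 (hmem a.1 a.2).1 (hmem a.1 a.2).2 hn = w a := by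
          apply Glue.ext'
          · exact (hwrk a).symm
          · rfl
          · exact hcopy e he (w a) (hw a)
        rw [this]
        exact hw a
      · intro hx
        have hxT : x.rk ∈ T := himg ▸ Finset.mem_image_of_mem _ hx
        refine ⟨⟨x.rk, hxT⟩, Finset.mem_attach _ _, ?_⟩
        have hwx : w ⟨x.rk, hxT⟩ = x :=
          hrkinj (hw _) hx (hwrk ⟨x.rk, hxT⟩)
        apply Glue.ext'
        · rfl
        · show (w ⟨x.rk, hxT⟩).side = x.side; rw [hwx]
        · exact hcopy e he x hx
  have := Nat.card_eq_of_bijective _ hbij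
  rw [flagF, ← hP]
  rw [← this]
  simp [Nat.card_eq_fintype_card]

end GlueCount

/-- The poset `P_n` has flag `h`-vector `h_S = 2 − (−1)^{|S|}` for all
`S ⊆ {1,…,n-1}`; in particular all entries are positive (`1` for even `|S|`, `3` for odd). -/
theorem glue_flagH (n : ℕ) (S : Finset ℕ) (hS : S ⊆ Finset.Icc 1 (n - 1)) :
    flagH (Glue.rk (n := n)) S = 2 - (-1) ^ S.card := by
  have key : ∀ T ∈ S.powerset, ((-1 : ℤ)) ^ (S.card - T.card) * (flagF (Glue.rk (n := n)) T : ℤ)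
      = 2 * ((2 : ℤ) ^ T.card * (-1) ^ (S \ T).card) +
        (if T = ∅ then -(-1 : ℤ) ^ S.card else 0) := by
    intro T hT
    have hTS : T ⊆ S := Finset.mem_powerset.mp hT
    have hcd : (S \ T).card = S.card - T.card := Finset.card_sdiff_of_subset hTS
    rcases T.eq_empty_or_nonempty with rfl | hne
    · rw [glue_flagF_empty]
      simp only [Finset.card_empty, Nat.sub_zero, Finset.sdiff_empty, if_pos rfl]
      push_cast
      ring
    · rw [glue_flagF_nonempty n T (hTS.trans hS) hne, if_neg hne.ne_empty, hcd]
      push_cast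
      ring
  rw [flagH, Finset.sum_congr rfl key, Finset.sum_add_distrib, ← Finset.mul_sum]
  have h1 : ∑ T ∈ S.powerset, (2 : ℤ) ^ T.card * (-1) ^ (S \ T).card = 1 := by
    have h := Finset.prod_add (fun _ : ℕ => (2 : ℤ)) (fun _ => (-1 : ℤ)) S
    simp only [Finset.prod_const] at h
    rw [← h]
    norm_num
  rw [h1, Finset.sum_ite_eq' S.powerset ∅ (fun _ => -(-1 : ℤ) ^ S.card),
    if_pos (Finset.empty_mem_powerset S)]
  ring
end
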